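/- Let G be a group freely generated by a family of involutions, G = ∗_{r∈R} ℤ/2ℤ. Let 𝒢 be the free group on symbols r̃ for r ∈ R, with the natural surjection 𝒢 → G sending r̃ to r. Then the kernel F of 𝒢 → G is a free group, freely generated by the elements w r̃² w⁻¹, where w ranges over all reduced words in the generators r̃ that contain no subword of the form r̃r̃ (square-free words). -/

import Mathlib

namespace Stmt17Aux

open MulOpposite

variable {R : Type*}

abbrev SF (R : Type*) := {x : List R × R // List.Chain' (· ≠ ·) (x.1 ++ [x.2])}
abbrev LL (R : Type*) := {l : List R // List.Chain' (· ≠ ·) l}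

def f0 : FreeGroup (SF R) →* FreeGroup R :=
  FreeGroup.lift (fun x =>
      (List.map FreeGroup.of x.1.1).prod * FreeGroup.of x.1.2 * FreeGroup.of x.1.2 *
        ((List.map FreeGroup.of x.1.1).prod)⁻¹)

def pi0 : FreeGroup R →* Monoid.CoprodI (fun _ : R => Multiplicative (ZMod 2)) :=
  FreeGroup.lift (fun r =>
      Monoid.CoprodI.of (M := fun _ : R => Multiplicative (ZMod 2)) (i := r)
        (Multiplicative.ofAdd (1 : ZMod 2)))

lemma chain_dropLast {l : List R} (h : List.Chain' (· ≠ ·) l) :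
    List.Chain' (· ≠ ·) l.dropLast :=
  h.prefix (List.dropLast_prefix l)

lemma chain_concat_of_ne {l : List R} {r : R} (h : List.Chain' (· ≠ ·) l)
    (hr : l.getLast? ≠ some r) : List.Chain' (· ≠ ·) (l ++ [r]) := by
  refine List.isChain_append.2 ⟨h, List.isChain_singleton r, ?_⟩
  intro x hx y hy
  simp only [List.head?_cons, Option.mem_def, Option.some.injEq] at hy
  subst hy
  rintro rfl
  exact hr hx

lemma chain_dropLast_concat {l : List R} {r : R} (h : List.Chain' (· ≠ ·) l)
    (hr : l.getLast? = some r) : List.Chain' (· ≠ ·) (l.dropLast ++ [r]) := by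
  rwa [List.dropLast_append_getLast? r hr]

lemma getLast?_dropLast_ne {l : List R} {r : R} (h : List.Chain' (· ≠ ·) l)
    (hr : l.getLast? = some r) : l.dropLast.getLast? ≠ some r := by
  have hl : l.dropLast ++ [r] = l := List.dropLast_append_getLast? r hr
  have h2 := List.isChain_append.1 (hl ▸ h)
  intro hcon
  exact h2.2.2 r hcon r (by simp) rfl

noncomputable def toggleFun (r : R) (l : LL R) : LL R := by
  classical
  exact if h : l.val.getLast? = some r then
    ⟨l.val.dropLast, chain_dropLast l.2⟩
  else
    ⟨l.val ++ [r], chain_concat_of_ne l.2 h⟩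

lemma toggleFun_pos (r : R) (l : LL R) (h : l.val.getLast? = some r) :
    toggleFun r l = ⟨l.val.dropLast, chain_dropLast l.2⟩ := by
  simp [toggleFun, h]

lemma toggleFun_neg (r : R) (l : LL R) (h : l.val.getLast? ≠ some r) :
    toggleFun r l = ⟨l.val ++ [r], chain_concat_of_ne l.2 h⟩ := by
  simp [toggleFun, h]

lemma toggleFun_invol (r : R) : Function.Involutive (toggleFun r : LL R → LL R) := by
  intro l
  by_cases h : l.val.getLast? = some r
  · rw [toggleFun_pos r l h,
      toggleFun_neg r _ (getLast?_dropLast_ne l.2 h)]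
    exact Subtype.ext (List.dropLast_append_getLast? r h)
  · rw [toggleFun_neg r l h, toggleFun_pos r _ (by simp [List.getLast?_concat])]
    exact Subtype.ext (by simp [List.dropLast_concat])

noncomputable def togglePerm (r : R) : Equiv.Perm (LL R) :=
  (toggleFun_invol r).toPerm

lemma togglePerm_apply (r : R) (l : LL R) : togglePerm r l = toggleFun r l := rfl

def involHom {A : Type*} [Group A] (a : A) (ha : a * a = 1) :
    Multiplicative (ZMod 2) →* A where
  toFun x := a ^ (Multiplicative.toAdd x).val
  map_one' := by
    show a ^ (0 : ZMod 2).val = 1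
    simp [ZMod.val_zero]
  map_mul' x y := by
    have key : ∀ n : ℕ, a ^ (n % 2) = a ^ n := by
      intro n
      conv_rhs => rw [← Nat.div_add_mod n 2]
      rw [pow_add, pow_mul, show a ^ 2 = 1 from by rw [pow_two, ha], one_pow, one_mul]
    show a ^ ((Multiplicative.toAdd x + Multiplicative.toAdd y).val) = _
    rw [ZMod.val_add, key, pow_add]

lemma involHom_ofAdd_one {A : Type*} [Group A] (a : A) (ha : a * a = 1) :
    involHom a ha (Multiplicative.ofAdd (1 : ZMod 2)) = a := by
  show a ^ (1 : ZMod 2).val = a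
  rw [show (1 : ZMod 2).val = 1 from rfl, pow_one]

lemma togglePerm_sq (r : R) : togglePerm r * togglePerm r = 1 := by
  ext l
  rw [Equiv.Perm.mul_apply, togglePerm_apply, togglePerm_apply, toggleFun_invol r l]
  rfl

end Stmt17Aux
namespace Stmt17Aux
open MulOpposite
variable {R : Type*}

noncomputable def Tact : Monoid.CoprodI (fun _ : R => Multiplicative (ZMod 2)) →*
    (Equiv.Perm (LL R))ᵐᵒᵖ :=
  Monoid.CoprodI.lift (fun r => involHom (op (togglePerm r))
    (by rw [← op_mul, togglePerm_sq, op_one]))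

lemma Tact_of (r : R) :
    Tact (Monoid.CoprodI.of (M := fun _ : R => Multiplicative (ZMod 2)) (i := r)
      (Multiplicative.ofAdd (1 : ZMod 2))) = op (togglePerm r) := by
  rw [Tact, Monoid.CoprodI.lift_of, involHom_ofAdd_one]

lemma pi0_of (r : R) : pi0 (FreeGroup.of r) =
    Monoid.CoprodI.of (M := fun _ : R => Multiplicative (ZMod 2)) (i := r)
      (Multiplicative.ofAdd (1 : ZMod 2)) := by
  rw [pi0, FreeGroup.lift_apply_of]

noncomputable def sigma (l : LL R) : FreeGroup R := (l.val.map FreeGroup.of).prod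

lemma sigma_toggle_neg (r : R) (l : LL R) (h : l.val.getLast? ≠ some r) :
    sigma (toggleFun r l) = sigma l * FreeGroup.of r := by
  rw [toggleFun_neg r l h]
  simp [sigma]

lemma key (u : FreeGroup R) :
    ∀ l : LL R, ∃ c : FreeGroup (SF R),
      sigma l * u = f0 c * sigma ((Tact (pi0 u)).unop l) := by
  induction u using FreeGroup.induction_on with
  | C1 =>
    intro l
    exact ⟨1, by simp⟩
  | of r =>
    intro l
    have hpure : (pure r : FreeGroup R) = FreeGroup.of r := rfl
    rw [← hpure]
    have htog : (Tact (pi0 (pure r))).unop l = toggleFun r l := by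
      rw [hpure, pi0_of, Tact_of, unop_op, togglePerm_apply]
    rw [htog, hpure]
    by_cases h : l.val.getLast? = some r
    · have hl : l.val.dropLast ++ [r] = l.val := List.dropLast_append_getLast? r h
      refine ⟨FreeGroup.of ⟨(l.val.dropLast, r), chain_dropLast_concat l.2 h⟩, ?_⟩
      rw [toggleFun_pos r l h, f0, FreeGroup.lift_apply_of]
      have hsig : sigma l = (l.val.dropLast.map FreeGroup.of).prod * FreeGroup.of r := by
        rw [sigma, ← hl]
        simp
      rw [hsig]
      show _ = _ * sigma ⟨l.val.dropLast, _⟩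
      rw [sigma]
      group
    · exact ⟨1, by rw [sigma_toggle_neg r l h]; simp⟩
  | inv_of r ih =>
    intro l
    obtain ⟨c, hc⟩ := ih ((Tact (pi0 (FreeGroup.of r)⁻¹)).unop l)
    have hll : (Tact (pi0 (FreeGroup.of r))).unop ((Tact (pi0 (FreeGroup.of r)⁻¹)).unop l) = l := by
      rw [map_inv, map_inv, unop_inv]
      exact Equiv.apply_symm_apply _ l
    rw [hll] at hc
    refine ⟨c⁻¹, ?_⟩
    have hs : sigma l = (f0 c)⁻¹ * (sigma ((Tact (pi0 (FreeGroup.of r)⁻¹)).unop l) * FreeGroup.of r) := by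
      rw [hc]; group
    rw [map_inv, hs]
    group
  | mul u v hu hv =>
    intro l
    obtain ⟨c, hc⟩ := hu l
    obtain ⟨d, hd⟩ := hv ((Tact (pi0 u)).unop l)
    refine ⟨c * d, ?_⟩
    have hcomp : (Tact (pi0 (u * v))).unop l
        = (Tact (pi0 v)).unop ((Tact (pi0 u)).unop l) := by
      rw [map_mul, map_mul, unop_mul, Equiv.Perm.mul_apply]
    rw [hcomp, ← mul_assoc, hc, mul_assoc, hd, map_mul]
    group

end Stmt17Aux
namespace Stmt17Aux
open MulOpposite
variable {R : Type*}

noncomputable def coc (r : R) (l : LL R) : FreeGroup (SF R) := by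
  classical
  exact if h : l.val.getLast? = some r then
    FreeGroup.of ⟨(l.val.dropLast, r), chain_dropLast_concat l.2 h⟩
  else 1

lemma coc_pos (r : R) (l : LL R) (h : l.val.getLast? = some r) :
    coc r l = FreeGroup.of ⟨(l.val.dropLast, r), chain_dropLast_concat l.2 h⟩ := by
  simp [coc, h]

lemma coc_neg (r : R) (l : LL R) (h : l.val.getLast? ≠ some r) : coc r l = 1 := by
  simp [coc, h]

noncomputable def mulCoc (r : R) : Equiv (FreeGroup (SF R) × LL R) (FreeGroup (SF R) × LL R) where
  toFun p := (p.1 * coc r p.2, p.2)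
  invFun p := (p.1 * (coc r p.2)⁻¹, p.2)
  left_inv p := by simp
  right_inv p := by simp

noncomputable def A (r : R) : Equiv.Perm (FreeGroup (SF R) × LL R) :=
  (mulCoc r).trans ((Equiv.refl (FreeGroup (SF R))).prodCongr (togglePerm r))

lemma A_apply (r : R) (p : FreeGroup (SF R) × LL R) :
    A r p = (p.1 * coc r p.2, toggleFun r p.2) := rfl

noncomputable def Lam : FreeGroup R →* (Equiv.Perm (FreeGroup (SF R) × LL R))ᵐᵒᵖ :=
  FreeGroup.lift fun r => op (A r)

lemma Lam_mul_apply (u v : FreeGroup R) (p : FreeGroup (SF R) × LL R) :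
    (Lam (u * v)).unop p = (Lam v).unop ((Lam u).unop p) := by
  rw [map_mul, unop_mul, Equiv.Perm.mul_apply]

lemma Lam_of_apply (r : R) (p : FreeGroup (SF R) × LL R) :
    (Lam (FreeGroup.of r)).unop p = (p.1 * coc r p.2, toggleFun r p.2) := by
  rw [Lam, FreeGroup.lift_apply_of, unop_op, A_apply]

def e0 : LL R := ⟨[], List.isChain_nil⟩

lemma W (w : List R) : ∀ (l : LL R) (hc : List.Chain' (· ≠ ·) (l.val ++ w))
    (h : FreeGroup (SF R)),
    (Lam ((w.map FreeGroup.of).prod)).unop (h, l) = (h, ⟨l.val ++ w, hc⟩) := by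
  induction w with
  | nil =>
    intro l hc h
    simp only [List.map_nil, List.prod_nil, map_one, unop_one, Equiv.Perm.one_apply]
    exact Prod.ext rfl (Subtype.ext (by simp))
  | cons a w ih =>
    intro l hc h
    have hna : l.val.getLast? ≠ some a := by
      intro hcon
      exact (List.isChain_append.1 hc).2.2 a hcon a (by simp) rfl
    have hc' : List.Chain' (· ≠ ·) ((l.val ++ [a]) ++ w) := by
      simpa [List.append_assoc] using hc
    have hstep : (Lam (FreeGroup.of a)).unop (h, l)
        = (h, ⟨l.val ++ [a], chain_concat_of_ne l.2 hna⟩) := by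
      rw [Lam_of_apply, coc_neg a l hna, toggleFun_neg a l hna, mul_one]
    have hprod : ((a :: w).map FreeGroup.of).prod
        = FreeGroup.of a * (w.map FreeGroup.of).prod := by simp
    rw [hprod, Lam_mul_apply, hstep, ih ⟨l.val ++ [a], chain_concat_of_ne l.2 hna⟩ hc' h]
    exact Prod.ext rfl (Subtype.ext (by simp))

lemma inj_key (s : FreeGroup (SF R)) :
    ∀ h : FreeGroup (SF R), (Lam (f0 s)).unop (h, e0) = (h * s, e0) := by
  induction s using FreeGroup.induction_on with
  | C1 => intro h; simp
  | of x =>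
    intro h
    have hpure : (pure x : FreeGroup (SF R)) = FreeGroup.of x := rfl
    obtain ⟨⟨w, r⟩, hx⟩ := x
    have hw : List.Chain' (· ≠ ·) (([] : List R) ++ w) := by
      exact (List.isChain_append.1 hx).1
    have hwr : w.getLast? ≠ some r := by
      intro hcon
      exact (List.isChain_append.1 hx).2.2 r hcon r (by simp) rfl
    have hf0 : f0 (FreeGroup.of ⟨(w, r), hx⟩)
        = (w.map FreeGroup.of).prod * FreeGroup.of r * FreeGroup.of r *
            ((w.map FreeGroup.of).prod)⁻¹ := by
      rw [f0, FreeGroup.lift_apply_of]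
    set P : FreeGroup R := (w.map FreeGroup.of).prod with hP
    set lw : LL R := ⟨([] : List R) ++ w, hw⟩ with hlw
    have step1 : ∀ g : FreeGroup (SF R), (Lam P).unop (g, e0) = (g, lw) := fun g => W w e0 hw g
    have hlwlast : lw.val.getLast? ≠ some r := by simpa [hlw] using hwr
    have step2 : (Lam (FreeGroup.of r)).unop (h, lw)
        = (h, ⟨lw.val ++ [r], chain_concat_of_ne lw.2 hlwlast⟩) := by
      rw [Lam_of_apply, coc_neg r lw hlwlast, toggleFun_neg r lw hlwlast, mul_one]
    set l2 : LL R := ⟨lw.val ++ [r], chain_concat_of_ne lw.2 hlwlast⟩ with hl2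
    have hl2last : l2.val.getLast? = some r := by simp [hl2, List.getLast?_concat]
    have hxeq : (⟨(l2.val.dropLast, r), chain_dropLast_concat l2.2 hl2last⟩ : SF R)
        = ⟨(w, r), hx⟩ := by
      apply Subtype.ext
      exact Prod.ext (by simp [hl2, hlw, List.dropLast_concat]) rfl
    have step3 : (Lam (FreeGroup.of r)).unop (h, l2)
        = (h * FreeGroup.of ⟨(w, r), hx⟩, lw) := by
      rw [Lam_of_apply, coc_pos r l2 hl2last, toggleFun_pos r l2 hl2last, hxeq]
      refine Prod.ext rfl (Subtype.ext ?_)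
      simp [hl2, hlw, List.dropLast_concat]
    have step4 : (Lam P⁻¹).unop (h * FreeGroup.of ⟨(w, r), hx⟩, lw)
        = (h * FreeGroup.of ⟨(w, r), hx⟩, e0) := by
      rw [map_inv, unop_inv]
      symm
      rw [Equiv.Perm.eq_inv_iff_eq]
      exact step1 _
    have hdecomp : f0 (FreeGroup.of ⟨(w, r), hx⟩) = ((P * FreeGroup.of r) * FreeGroup.of r) * P⁻¹ := by
      rw [hf0]
    rw [hdecomp, Lam_mul_apply, Lam_mul_apply, Lam_mul_apply, step1, step2, step3, step4]
  | inv_of x ih =>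
    intro h
    rw [map_inv, map_inv, unop_inv]
    symm
    rw [Equiv.Perm.eq_inv_iff_eq, ih]
    simp [mul_assoc]
  | mul s t ihs iht =>
    intro h
    rw [map_mul, Lam_mul_apply, ihs, iht, mul_assoc]

end Stmt17Aux
namespace Stmt17Aux
open MulOpposite
variable {R : Type*}

lemma pi0_f0 (s : FreeGroup (SF R)) : pi0 (f0 s) = 1 := by
  have hcomp : (pi0.comp f0 : FreeGroup (SF R) →* _) = 1 := by
    apply FreeGroup.ext_hom
    intro x
    rw [MonoidHom.comp_apply, f0, FreeGroup.lift_apply_of]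
    have h2 : (Monoid.CoprodI.of (M := fun _ : R => Multiplicative (ZMod 2)) (i := x.1.2)
          (Multiplicative.ofAdd (1 : ZMod 2))) *
        Monoid.CoprodI.of (M := fun _ : R => Multiplicative (ZMod 2)) (i := x.1.2)
          (Multiplicative.ofAdd (1 : ZMod 2)) = 1 := by
      rw [← map_mul,
        show (Multiplicative.ofAdd (1 : ZMod 2)) * Multiplicative.ofAdd (1 : ZMod 2) = 1 from by
          decide, map_one]
    simp only [map_mul, map_inv, pi0_of, MonoidHom.one_apply]
    rw [mul_assoc _ (Monoid.CoprodI.of _) (Monoid.CoprodI.of _), h2, mul_one]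
    simp
  calc pi0 (f0 s) = (pi0.comp f0) s := rfl
    _ = 1 := by rw [hcomp]; rfl

lemma sigma_e0 : sigma (e0 : LL R) = 1 := rfl

end Stmt17Aux

/-- Let `G = ∗_{r∈R} ℤ/2ℤ` be the free product of copies of `ℤ/2ℤ` indexed by `R`, let `𝒢` be
the free group on symbols `r̃` for `r ∈ R`, and let `π : 𝒢 → G` be the natural surjection.
Then the kernel `F` of `π` is a free group, freely generated by the elements `w r̃² w⁻¹` where
`w` ranges over the square-free positive words in the generators `r̃` such that `w r̃` is still
square-free (encoded by pairs `(w, r)` with `List.Chain' (· ≠ ·) (w ++ [r])`): the induced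
homomorphism from the free group on these pairs is injective with image `ker π`. -/
theorem stmt_17 (R : Type*)
    (π : FreeGroup R →* Monoid.CoprodI (fun _ : R => Multiplicative (ZMod 2)))
    (hπ : π = FreeGroup.lift (fun r =>
      Monoid.CoprodI.of (M := fun _ : R => Multiplicative (ZMod 2)) (i := r)
        (Multiplicative.ofAdd (1 : ZMod 2))))
    (f : FreeGroup {x : List R × R // List.Chain' (· ≠ ·) (x.1 ++ [x.2])} →* FreeGroup R)
    (hf : f = FreeGroup.lift (fun x =>
      (List.map FreeGroup.of x.1.1).prod * FreeGroup.of x.1.2 * FreeGroup.of x.1.2 *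
        ((List.map FreeGroup.of x.1.1).prod)⁻¹)) :
    Function.Injective f ∧ f.range = π.ker := by
  have hf0 : f = Stmt17Aux.f0 := hf
  have hpi0 : π = Stmt17Aux.pi0 := hπ
  subst hf0 hpi0
  constructor
  · intro a b hab
    have ha := Stmt17Aux.inj_key (R := R) a 1
    have hb := Stmt17Aux.inj_key (R := R) b 1
    rw [hab, hb] at ha
    have := congrArg Prod.fst ha
    symm
    simpa using this
  · apply le_antisymm
    · rintro y ⟨s, rfl⟩
      exact MonoidHom.mem_ker.mpr (Stmt17Aux.pi0_f0 s)
    · intro u hu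
      obtain ⟨c, hc⟩ := Stmt17Aux.key (R := R) u Stmt17Aux.e0
      rw [MonoidHom.mem_ker.mp hu, map_one, MulOpposite.unop_one] at hc
      rw [Equiv.Perm.one_apply, Stmt17Aux.sigma_e0, one_mul, mul_one] at hc
      exact MonoidHom.mem_range.mpr ⟨c, hc.symm⟩
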